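/- Let G be a finite group, let r = (r_0, …, r_{m−1}) be an m-tuple of positive integers, and let a ∈ G^m have associated nested subgroups A_0 = ⊥, A_{i+1} = ⟨A_i, a_i⟩. Then the number of m-tuples b ∈ G^m that are orbit-equivalent to a and of type r equals Σ_s ∏_{i=0}^{m−1} λ_{s_i}(A_i, A_{i+1}), where the sum runs over all distinct m-tuples s = (s_0, …, s_{m−1}) of positive integers whose multiset of entries equals that of r. -/

import Mathlib

/-- The nested subgroups associated to an `m`-tuple `a`:
`A 0 = ⊥` and `A (i+1) = ⟨A i, a i⟩`. -/
def nestedSubgroup {G : Type*} [Group G] {m : ℕ} (a : Fin m → G) : ℕ → Subgroup G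
  | 0 => ⊥
  | i + 1 =>
      if h : i < m then nestedSubgroup a i ⊔ Subgroup.closure {a ⟨i, h⟩}
      else nestedSubgroup a i

/-- `A` lies in the orbit of `B` under the natural action of `Aut G` on subgroups. -/
def inAutOrbit {G : Type*} [Group G] (A B : Subgroup G) : Prop :=
  ∃ φ : MulAut G, Subgroup.map φ.toMonoidHom B = A

/-- `λ_i(A, B)`: the number of `x ∈ G` of order `i` with `⟨A, x⟩` in the
`Aut G`-orbit of `B`. -/
noncomputable def lambdaConstOrd {G : Type*} [Group G] (i : ℕ) (A B : Subgroup G) : ℕ :=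
  Nat.card {x : G // orderOf x = i ∧ inAutOrbit (A ⊔ Subgroup.closure {x}) B}

/-- Two `m`-tuples are orbit-equivalent if their nested subgroups are in the same
`Aut G`-orbits. -/
def orbitEquiv {G : Type*} [Group G] {m : ℕ} (a b : Fin m → G) : Prop :=
  ∀ i ≤ m, inAutOrbit (nestedSubgroup a i) (nestedSubgroup b i)

/-- The multiset of orders of the entries of an `m`-tuple. -/
noncomputable def tupleType {G : Type*} [Group G] {m : ℕ} (b : Fin m → G) : Multiset ℕ :=
  Multiset.map (fun i => orderOf (b i)) Finset.univ.val

section Aux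

variable {G : Type*} [Group G]

lemma inAutOrbit_refl (A : Subgroup G) : inAutOrbit A A :=
  ⟨1, Subgroup.map_id A⟩

lemma inAutOrbit_map_iff (φ : MulAut G) (A C : Subgroup G) :
    inAutOrbit (Subgroup.map φ.toMonoidHom A) C ↔ inAutOrbit A C := by
  constructor
  · rintro ⟨ψ, hψ⟩
    refine ⟨φ⁻¹ * ψ, ?_⟩
    have h1 : (φ⁻¹ * ψ).toMonoidHom = (φ⁻¹.toMonoidHom).comp ψ.toMonoidHom := rfl
    rw [h1, ← Subgroup.map_map, hψ, Subgroup.map_map]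
    ext x
    simp
  · rintro ⟨ψ, hψ⟩
    exact ⟨φ * ψ, by
      have h1 : (φ * ψ).toMonoidHom = (φ.toMonoidHom).comp ψ.toMonoidHom := rfl
      rw [h1, ← Subgroup.map_map, hψ]⟩

lemma multiset_map_univ_eq_iff {α : Type*} [DecidableEq α] {m : ℕ} (f g : Fin m → α) :
    Multiset.map f Finset.univ.val = Multiset.map g Finset.univ.val ↔
      ∃ σ : Equiv.Perm (Fin m), f = g ∘ σ := by
  constructor
  · intro h
    have hcount : ∀ x : α, Fintype.card {i // f i = x} = Fintype.card {i // g i = x} := by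
      intro x
      have := congrArg (Multiset.count x) h
      rw [Multiset.count_map, Multiset.count_map] at this
      simpa [Fintype.card_subtype, Finset.filter, eq_comm] using this
    have e : ∀ x : α, {i // f i = x} ≃ {i // g i = x} := fun x =>
      Fintype.equivOfCardEq (hcount x)
    refine ⟨Equiv.ofFiberEquiv e, ?_⟩
    funext i
    exact (Equiv.ofFiberEquiv_map e i).symm
  · rintro ⟨σ, rfl⟩
    have h1 : Multiset.map (⇑σ) Finset.univ.val = Finset.univ.val :=
      Multiset.map_univ_val_equiv σ
    conv_rhs => rw [← h1]
    rw [Multiset.map_map]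

/-- Transport lemma: counting extensions from an orbit-equivalent subgroup. -/
lemma lambda_transport {A B : Subgroup G} (h : inAutOrbit B A) (i : ℕ) (C : Subgroup G) :
    Nat.card {x : G // orderOf x = i ∧ inAutOrbit (B ⊔ Subgroup.closure {x}) C} =
      lambdaConstOrd i A C := by
  obtain ⟨φ, hφ⟩ := h
  refine Nat.card_congr (Equiv.subtypeEquiv φ.toEquiv.symm ?_)
  intro x
  have hord : orderOf (φ.symm x) = orderOf x :=
    orderOf_injective φ.symm.toMonoidHom φ.symm.injective x
  have hmap : Subgroup.map φ.toMonoidHom (A ⊔ Subgroup.closure {φ.symm x}) =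
      B ⊔ Subgroup.closure {x} := by
    rw [Subgroup.map_sup, hφ, MonoidHom.map_closure]
    simp
  constructor
  · rintro ⟨h1, h2⟩
    refine ⟨by simpa [hord] using h1, ?_⟩
    rw [← hmap] at h2
    rwa [← inAutOrbit_map_iff φ]
  · rintro ⟨h1, h2⟩
    refine ⟨by simpa [hord] using h1, ?_⟩
    rw [← hmap, inAutOrbit_map_iff]
    exact h2

lemma nestedSubgroup_zero {m : ℕ} (a : Fin m → G) : nestedSubgroup a 0 = ⊥ := rfl

lemma nestedSubgroup_succ {m : ℕ} (a : Fin m → G) (i : ℕ) (h : i < m) :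
    nestedSubgroup a (i + 1) = nestedSubgroup a i ⊔ Subgroup.closure {a ⟨i, h⟩} := by
  rw [nestedSubgroup, dif_pos h]

lemma nestedSubgroup_snoc {m : ℕ} (a : Fin m → G) (x : G) :
    ∀ i ≤ m, nestedSubgroup (Fin.snoc a x : Fin (m + 1) → G) i = nestedSubgroup a i := by
  intro i
  induction i with
  | zero => intro _; rfl
  | succ i ih =>
    intro hi
    have him : i < m := hi
    rw [nestedSubgroup_succ _ i (Nat.lt_succ_of_lt him), nestedSubgroup_succ a i him,
      ih (le_of_lt him)]
    congr 2
    have : (⟨i, Nat.lt_succ_of_lt him⟩ : Fin (m + 1)) = Fin.castSucc ⟨i, him⟩ := rfl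
    rw [this, Fin.snoc_castSucc]

lemma nestedSubgroup_snoc_top {m : ℕ} (a : Fin m → G) (x : G) :
    nestedSubgroup (Fin.snoc a x : Fin (m + 1) → G) (m + 1) =
      nestedSubgroup a m ⊔ Subgroup.closure {x} := by
  rw [nestedSubgroup_succ _ m (Nat.lt_succ_self m), nestedSubgroup_snoc a x m le_rfl]
  congr 2
  have : (⟨m, Nat.lt_succ_self m⟩ : Fin (m + 1)) = Fin.last m := rfl
  rw [this, Fin.snoc_last]

lemma nestedSubgroup_init {m : ℕ} (a : Fin (m + 1) → G) (i : ℕ) (hi : i ≤ m) :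
    nestedSubgroup (Fin.init a) i = nestedSubgroup a i := by
  conv_rhs => rw [← Fin.snoc_init_self a]
  rw [nestedSubgroup_snoc _ _ i hi]

lemma orbitEquiv_snoc_iff {m : ℕ} (a : Fin (m + 1) → G) (b : Fin m → G) (x : G) :
    orbitEquiv (Fin.snoc b x : Fin (m + 1) → G) a ↔
      orbitEquiv b (Fin.init a) ∧
        inAutOrbit (nestedSubgroup b m ⊔ Subgroup.closure {x}) (nestedSubgroup a (m + 1)) := by
  constructor
  · intro h
    refine ⟨fun i hi => ?_, ?_⟩
    · have := h i (le_trans hi (Nat.le_succ m))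
      rw [nestedSubgroup_snoc b x i hi] at this
      rwa [nestedSubgroup_init a i hi]
    · have := h (m + 1) le_rfl
      rwa [nestedSubgroup_snoc_top b x] at this
  · rintro ⟨h1, h2⟩ i hi
    rcases Nat.lt_or_ge i (m + 1) with hlt | hge
    · have hi' : i ≤ m := Nat.lt_succ_iff.mp hlt
      rw [nestedSubgroup_snoc b x i hi', ← nestedSubgroup_init a i hi']
      exact h1 i hi'
    · have : i = m + 1 := le_antisymm hi hge
      subst this
      rwa [nestedSubgroup_snoc_top b x]

/-- Core counting lemma by induction on `m`. -/
lemma card_orbitEquiv_orders (G : Type*) [Group G] [Fintype G] :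
    ∀ (m : ℕ) (a : Fin m → G) (s : Fin m → ℕ),
    Nat.card {b : Fin m → G // orbitEquiv b a ∧ ∀ i, orderOf (b i) = s i} =
      ∏ i : Fin m,
        lambdaConstOrd (s i) (nestedSubgroup a (i : ℕ)) (nestedSubgroup a ((i : ℕ) + 1)) := by
  intro m
  induction m with
  | zero =>
    intro a s
    rw [Finset.prod_of_isEmpty]
    have : ∀ b : Fin 0 → G, orbitEquiv b a ∧ ∀ i, orderOf (b i) = s i := by
      intro b
      refine ⟨fun i hi => ?_, fun i => i.elim0⟩
      interval_cases i
      exact inAutOrbit_refl _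
    rw [Nat.card_congr (Equiv.subtypeUnivEquiv this)]
    exact Nat.card_unique
  | succ m ih =>
    intro a s
    classical
    set a' := Fin.init a with ha'
    set T := {b' : Fin m → G //
        orbitEquiv b' a' ∧ ∀ i : Fin m, orderOf (b' i) = s i.castSucc} with hT
    have key : (Σ b' : T,
        {x : G // orderOf x = s (Fin.last m) ∧
          inAutOrbit (nestedSubgroup b'.1 m ⊔ Subgroup.closure {x})
            (nestedSubgroup a (m + 1))}) ≃
        {b : Fin (m + 1) → G // orbitEquiv b a ∧ ∀ i, orderOf (b i) = s i} := by
      refine Equiv.ofBijective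
        (fun p => ⟨Fin.snoc p.1.1 p.2.1, ?_, ?_⟩) ⟨?_, ?_⟩
      · exact (orbitEquiv_snoc_iff a p.1.1 p.2.1).mpr ⟨p.1.2.1, p.2.2.2⟩
      · intro i
        induction i using Fin.lastCases with
        | last => simpa using p.2.2.1
        | cast j => simpa using p.1.2.2 j
      · rintro ⟨⟨b', hb'⟩, x, hx⟩ ⟨⟨c', hc'⟩, y, hy⟩ h
        have h' : (Fin.snoc b' x : Fin (m + 1) → G) = Fin.snoc c' y :=
          congrArg Subtype.val h
        have h1 : b' = c' := by
          have := congrArg Fin.init h'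
          rwa [Fin.init_snoc, Fin.init_snoc] at this
        have h2 : x = y := by
          have := congrArg (fun f : Fin (m + 1) → G => f (Fin.last m)) h'
          simpa using this
        subst h1; subst h2; rfl
      · rintro ⟨b, hb1, hb2⟩
        have hsplit := (orbitEquiv_snoc_iff a (Fin.init b) (b (Fin.last m))).mp
          (by rwa [Fin.snoc_init_self])
        refine ⟨⟨⟨Fin.init b, hsplit.1, fun i => hb2 i.castSucc⟩,
          ⟨b (Fin.last m), hb2 (Fin.last m), hsplit.2⟩⟩, ?_⟩
        exact Subtype.ext (Fin.snoc_init_self b)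
    rw [← Nat.card_congr key]
    classical
    rw [Nat.card_eq_fintype_card, Fintype.card_sigma]
    have hfiber : ∀ b' : T,
        Fintype.card {x : G // orderOf x = s (Fin.last m) ∧
          inAutOrbit (nestedSubgroup b'.1 m ⊔ Subgroup.closure {x})
            (nestedSubgroup a (m + 1))} =
        lambdaConstOrd (s (Fin.last m)) (nestedSubgroup a m) (nestedSubgroup a (m + 1)) := by
      intro b'
      rw [← Nat.card_eq_fintype_card]
      refine lambda_transport ?_ _ _
      have := b'.2.1 m le_rfl
      rwa [nestedSubgroup_init a m le_rfl] at this
    rw [Finset.sum_congr rfl fun b' _ => hfiber b', Finset.sum_const, Finset.card_univ,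
      smul_eq_mul, ← Nat.card_eq_fintype_card]
    rw [ih a' (fun i => s i.castSucc)]
    rw [Fin.prod_univ_castSucc
      (f := fun i : Fin (m + 1) =>
        lambdaConstOrd (s i) (nestedSubgroup a (i : ℕ)) (nestedSubgroup a ((i : ℕ) + 1)))]
    congr 1
    refine Finset.prod_congr rfl fun i _ => ?_
    rw [nestedSubgroup_init a (i : ℕ) (le_of_lt i.2),
      nestedSubgroup_init a ((i : ℕ) + 1) i.2]
    rfl

end Aux

/-- The number of `m`-tuples orbit-equivalent to `a` and of type `r` equals
`∑_s ∏_{i<m} λ_{s i}(A_i, A_{i+1})`, the sum being over all distinct `m`-tuples `s`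
whose multiset of entries equals that of `r` (i.e., over the permuted versions of `r`). -/
theorem card_orbitEquiv_class_of_type {G : Type*} [Group G] [Fintype G] {m : ℕ}
    (r : Fin m → ℕ) (hr : ∀ i, 0 < r i) (a : Fin m → G) :
    Nat.card {b : Fin m → G // orbitEquiv b a ∧
        tupleType b = Multiset.map r Finset.univ.val} =
      ∑ s ∈ Finset.image (fun σ : Equiv.Perm (Fin m) => r ∘ σ) Finset.univ,
        ∏ i : Fin m,
          lambdaConstOrd (s i) (nestedSubgroup a (i : ℕ)) (nestedSubgroup a ((i : ℕ) + 1)) := by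
  classical
  rw [Nat.card_eq_fintype_card, Fintype.card_subtype]
  rw [Finset.card_eq_sum_card_fiberwise
    (f := fun b : Fin m → G => fun i => orderOf (b i))
    (t := Finset.image (fun σ : Equiv.Perm (Fin m) => r ∘ σ) Finset.univ)
    (fun b hb => by
      simp only [Finset.mem_coe, Finset.mem_filter] at hb
      obtain ⟨σ, hσ⟩ := (multiset_map_univ_eq_iff (fun i => orderOf (b i)) r).mp hb.2.2
      exact Finset.mem_image.mpr ⟨σ, Finset.mem_univ σ, hσ.symm⟩)]
  refine Finset.sum_congr rfl fun s hs => ?_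
  obtain ⟨σ, -, hσ⟩ := Finset.mem_image.mp hs
  have hsm : Multiset.map s Finset.univ.val = Multiset.map r Finset.univ.val :=
    (multiset_map_univ_eq_iff s r).mpr ⟨σ, hσ.symm⟩
  rw [Finset.filter_filter]
  have heq : Finset.filter
      (fun b : Fin m → G => (orbitEquiv b a ∧
        tupleType b = Multiset.map r Finset.univ.val) ∧ (fun i => orderOf (b i)) = s)
      Finset.univ =
      Finset.filter (fun b : Fin m → G => orbitEquiv b a ∧ ∀ i, orderOf (b i) = s i)
      Finset.univ := by
    refine Finset.filter_congr fun b _ => ?_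
    constructor
    · rintro ⟨⟨h1, -⟩, h3⟩
      exact ⟨h1, fun i => congrFun h3 i⟩
    · rintro ⟨h1, h2⟩
      have h3 : (fun i => orderOf (b i)) = s := funext h2
      refine ⟨⟨h1, ?_⟩, h3⟩
      show Multiset.map (fun i => orderOf (b i)) Finset.univ.val = _
      rw [h3, hsm]
  rw [heq, ← Fintype.card_subtype, ← Nat.card_eq_fintype_card]
  exact card_orbitEquiv_orders G m a s
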